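/- Let b : 𝔻 → ℂ be analytic with |b(ζ)| < 1 for almost every ζ ∈ 𝕋, and for each α ∈ 𝕋 let (μ_α)_a be the absolutely continuous part of the Aleksandrov–Clark measure of b at α, i.e. the measure with density (1 − |b(ζ)|²)/|α − b(ζ)|² with respect to normalized Lebesgue measure m on 𝕋. Then ∫_𝕋 (μ_α)_a(𝕋) dm(α) = 1. In particular, for m-almost every α ∈ 𝕋 the measure μ_α is absolutely continuous (its singular part has measure zero). -/

import Mathlib

open Complex MeasureTheory Set Metric Filter

set_option linter.unnecessarySimpa false

private lemma meanValue {f : ℂ → ℂ} (hf : DiffContOnCl ℂ f (ball 0 1)) :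
    ∫ θ in Ioc 0 (2 * Real.pi), f (Complex.exp (Complex.ofReal θ * Complex.I))
      = (2 * Real.pi) • f 0 := by
  have h := hf.circleIntegral_sub_inv_smul (mem_ball_self one_pos (x := (0:ℂ)))
  rw [circleIntegral] at h
  simp only [deriv_circleMap, sub_zero] at h
  have key : ∀ θ : ℝ, (circleMap 0 1 θ * Complex.I) • (circleMap 0 1 θ)⁻¹ • f (circleMap 0 1 θ)
      = Complex.I • f (circleMap 0 1 θ) := by
    intro θ
    have hne : circleMap 0 1 θ ≠ 0 := by simpa using circleMap_ne_center (c := (0:ℂ)) (R := 1) one_ne_zero (θ := θ)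
    rw [smul_smul, mul_comm, ← mul_assoc, inv_mul_cancel₀ hne, one_mul]
  simp only [key] at h
  rw [intervalIntegral.integral_smul] at h
  have h2 : (∫ θ in (0:ℝ)..(2*Real.pi), f (circleMap 0 1 θ)) = (2 * Real.pi : ℝ) • f 0 := by
    apply mul_left_cancel₀ I_ne_zero
    have := h
    simp only [smul_eq_mul] at this ⊢
    rw [this, Complex.real_smul]
    push_cast
    ring
  rw [intervalIntegral.integral_of_le (by positivity : (0:ℝ) ≤ 2*Real.pi)] at h2
  simpa [circleMap_zero] using h2

private lemma re_cayley {u : ℂ} (hu : ‖u‖ < 1) :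
    ((1 + u) / (1 - u)).re = (1 - ‖u‖ ^ 2) / ‖1 - u‖ ^ 2 := by
  have hD : (1 - u) ≠ 0 := by
    intro h
    have : u = 1 := by linear_combination -h
    simp [this] at hu
  have h1 : (1 + u) / (1 - u) = (1 + u) * (starRingEnd ℂ) (1 - u) / ((Complex.normSq (1-u) : ℝ) : ℂ) := by
    rw [← Complex.mul_conj]
    rw [mul_div_mul_right _ _ (by
      simp only [ne_eq, map_eq_zero]
      exact hD)]
  rw [h1, Complex.div_ofReal_re]
  have h2 : ((1 + u) * (starRingEnd ℂ) (1 - u)).re = 1 - ‖u‖ ^ 2 := by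
    rw [Complex.sq_norm]
    simp [Complex.mul_re, Complex.mul_im, Complex.add_re, Complex.add_im, Complex.sub_re,
      Complex.sub_im, Complex.conj_re, Complex.conj_im, Complex.sq_norm, Complex.normSq_apply]
    ring
  rw [h2, Complex.sq_norm, Complex.sq_norm]

private lemma re_poisson {w z : ℂ} (hw : ‖w‖ < 1) (hz : ‖z‖ = 1) :
    ((1 + (starRingEnd ℂ) w * z) / (1 - (starRingEnd ℂ) w * z)).re
      = (1 - ‖w‖ ^ 2) / ‖z - w‖ ^ 2 := by
  have hu : ‖(starRingEnd ℂ) w * z‖ < 1 := by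
    rw [norm_mul, Complex.norm_conj, hz, mul_one]; exact hw
  rw [re_cayley hu, norm_mul, Complex.norm_conj, hz, mul_one]
  congr 2
  have h : (1 : ℂ) - (starRingEnd ℂ) w * z = (starRingEnd ℂ) (z - w) * z := by
    have hz1 : (starRingEnd ℂ) z * z = 1 := by
      rw [mul_comm, Complex.mul_conj]
      norm_cast
      simp [← Complex.sq_norm, hz]
    rw [map_sub]
    ring_nf
    rw [mul_comm z ((starRingEnd ℂ) z), hz1]
    ring
  rw [h, norm_mul, Complex.norm_conj, hz, mul_one]

private lemma poisson {w : ℂ} (hw : ‖w‖ < 1) :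
    ∫ θ in Ioc 0 (2 * Real.pi),
      (1 - ‖w‖ ^ 2) / ‖Complex.exp (Complex.ofReal θ * Complex.I) - w‖ ^ 2
      = 2 * Real.pi := by
  set f : ℂ → ℂ := fun z => (1 + (starRingEnd ℂ) w * z) / (1 - (starRingEnd ℂ) w * z) with hfdef
  have hden : ∀ z : ℂ, ‖z‖ ≤ 1 → (1 - (starRingEnd ℂ) w * z) ≠ 0 := by
    intro z hz h
    have h1 : (starRingEnd ℂ) w * z = 1 := by linear_combination -h
    have : ‖(starRingEnd ℂ) w * z‖ < 1 := by
      rw [norm_mul, Complex.norm_conj]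
      calc ‖w‖ * ‖z‖ ≤ ‖w‖ * 1 := by
            exact mul_le_mul_of_nonneg_left hz (norm_nonneg w)
        _ < 1 := by rw [mul_one]; exact hw
    rw [h1] at this; simp at this
  have hdiff : ∀ z ∈ closedBall (0:ℂ) 1, DifferentiableAt ℂ f z := by
    intro z hz
    have : ‖z‖ ≤ 1 := by simpa [Complex.dist_eq] using hz
    exact DifferentiableAt.div (by fun_prop) (by fun_prop) (hden z this)
  have hf : DiffContOnCl ℂ f (ball 0 1) := by
    constructor
    · exact fun z hz => (hdiff z (ball_subset_closedBall hz)).differentiableWithinAt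
    · rw [closure_ball 0 one_ne_zero]
      exact fun z hz => (hdiff z hz).continuousAt.continuousWithinAt
  have hcont : Continuous fun θ : ℝ => f (Complex.exp (Complex.ofReal θ * Complex.I)) := by
    apply Continuous.div (by fun_prop) (by fun_prop)
    intro θ
    exact hden _ (le_of_eq (Complex.norm_exp_ofReal_mul_I θ))
  have hint : IntegrableOn (fun θ : ℝ => f (Complex.exp (Complex.ofReal θ * Complex.I)))
      (Ioc 0 (2 * Real.pi)) volume := hcont.integrableOn_Ioc
  have hmv := meanValue hf
  have hf0 : f 0 = 1 := by simp [hfdef]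
  have key : ∀ θ : ℝ,
      (1 - ‖w‖ ^ 2) / ‖Complex.exp (Complex.ofReal θ * Complex.I) - w‖ ^ 2
        = (f (Complex.exp (Complex.ofReal θ * Complex.I))).re := by
    intro θ
    exact (re_poisson hw (Complex.norm_exp_ofReal_mul_I θ)).symm
  simp_rw [key]
  have h := integral_re (μ := volume.restrict (Ioc 0 (2 * Real.pi))) hint
  simp only [RCLike.re_to_complex] at h
  rw [h, hmv, hf0]
  simp

set_option maxHeartbeats 1000000 in
/-- Let `b : 𝔻 → ℂ` be analytic with boundary values `B` satisfying `|B(ζ)| < 1` a.e. on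
the circle (parametrized by `t ↦ exp(it)`, `t ∈ (0, 2π]`, with normalized measure
`m = volume/(2π)`), and for each `α = exp(iθ) ∈ 𝕋` let `μ_θ` be the Aleksandrov–Clark
probability measure of `b` at `α`, whose absolutely continuous part has density
`(1 − |B(ζ)|²)/|α − B(ζ)|²` with respect to `m`.  Then
`∫_𝕋 (μ_α)_a(𝕋) dm(α) = 1`; in particular, for `m`-a.e. `α` the measure `μ_α` is
absolutely continuous (its singular part vanishes). -/
theorem stmt_0 (b : ℂ → ℂ) (B : ℝ → ℂ)
    (hb : AnalyticOn ℂ b (ball 0 1))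
    (hmap : ∀ z ∈ ball (0 : ℂ) 1, ‖b z‖ < 1)
    (hB : ∀ᵐ t ∂(volume.restrict (Ioc 0 (2 * Real.pi))),
      Tendsto (fun r : ℝ => b (Complex.ofReal r * Complex.exp (Complex.ofReal t * Complex.I)))
        (nhdsWithin 1 (Iio 1)) (nhds (B t)))
    (hB1 : ∀ᵐ t ∂(volume.restrict (Ioc 0 (2 * Real.pi))), ‖B t‖ < 1)
    (μ : ℝ → Measure ℝ)
    (hprob : ∀ θ, IsProbabilityMeasure (μ θ))
    (hdens : ∀ θ, (μ θ).rnDeriv (volume.restrict (Ioc 0 (2 * Real.pi)))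
      =ᵐ[volume.restrict (Ioc 0 (2 * Real.pi))] fun t =>
        ENNReal.ofReal ((1 - ‖B t‖ ^ 2) /
          ‖Complex.exp (Complex.ofReal θ * Complex.I) - B t‖ ^ 2 /
            (2 * Real.pi))) :
    (∫ θ in Ioc 0 (2 * Real.pi),
        (∫ t in Ioc 0 (2 * Real.pi),
          (1 - ‖B t‖ ^ 2) /
            ‖Complex.exp (Complex.ofReal θ * Complex.I) - B t‖ ^ 2 /
              (2 * Real.pi)) / (2 * Real.pi)) = 1 ∧
    ∀ᵐ θ ∂(volume.restrict (Ioc 0 (2 * Real.pi))),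
      (μ θ).singularPart (volume.restrict (Ioc 0 (2 * Real.pi))) = 0 := by
  set ν : Measure ℝ := volume.restrict (Ioc 0 (2 * Real.pi)) with hν
  have hpi : (0:ℝ) < 2 * Real.pi := by positivity
  -- Step 1: B is AEMeasurable
  have hBmeas : AEMeasurable B ν := by
    set r : ℕ → ℝ := fun n => 1 - 1 / (n + 1) with hr
    have hrlt : ∀ n, r n < 1 := by
      intro n
      have : (0:ℝ) < 1 / (n + 1) := by positivity
      simp only [hr]; linarith
    have hrnn : ∀ n, 0 ≤ r n := by
      intro n
      have : (1:ℝ) / (n + 1) ≤ 1 := by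
        rw [div_le_one (by positivity)]; linarith [Nat.cast_nonneg (α := ℝ) n]
      simp only [hr]; linarith
    have hrt : Tendsto r atTop (nhdsWithin 1 (Iio 1)) := by
      apply tendsto_nhdsWithin_of_tendsto_nhds_of_eventually_within
      · have : Tendsto (fun n : ℕ => 1 / ((n:ℝ) + 1)) atTop (nhds 0) :=
          tendsto_one_div_add_atTop_nhds_zero_nat
        have h2 := Tendsto.sub (tendsto_const_nhds (α := ℕ) (x := (1:ℝ))) this
        simpa [hr, one_div] using h2
      · exact Eventually.of_forall fun n => hrlt n
    have hmem : ∀ (n : ℕ) (t : ℝ),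
        (Complex.ofReal (r n) * Complex.exp (Complex.ofReal t * Complex.I)) ∈ ball (0:ℂ) 1 := by
      intro n t
      simp only [mem_ball, dist_zero_right, norm_mul, Complex.norm_real,
        Complex.norm_exp_ofReal_mul_I, mul_one]
      rw [Real.norm_of_nonneg (hrnn n)]
      exact hrlt n
    have hcont : ∀ n : ℕ, Continuous fun t : ℝ =>
        b (Complex.ofReal (r n) * Complex.exp (Complex.ofReal t * Complex.I)) := by
      intro n
      apply (hb.continuousOn).comp_continuous (by fun_prop)
      exact fun t => hmem n t
    apply aemeasurable_of_tendsto_metrizable_ae (μ := ν) (f := fun (n : ℕ) (t : ℝ) =>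
      b (Complex.ofReal (r n) * Complex.exp (Complex.ofReal t * Complex.I))) (u := atTop)
      (fun n => (hcont n).measurable.aemeasurable)
    filter_upwards [hB] with t ht
    exact ht.comp hrt
  obtain ⟨B', hB'meas, hBB'⟩ := hBmeas
  -- Step 2: modify to get everywhere |B2| < 1
  set B2 : ℝ → ℂ := fun t => if ‖B' t‖ < 1 then B' t else 0 with hB2def
  have hB2meas : Measurable B2 := by
    apply Measurable.ite _ hB'meas measurable_const
    exact measurableSet_lt (continuous_norm.measurable.comp hB'meas) measurable_const
  have hB2lt : ∀ t, ‖B2 t‖ < 1 := by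
    intro t
    simp only [hB2def]
    split
    · assumption
    · simp
  have hBB2 : B =ᵐ[ν] B2 := by
    filter_upwards [hBB', hB1] with t h1 h2
    simp only [hB2def, ← h1, if_pos h2]
  -- Step 3: the density function built from B2
  set g : ℝ → ℝ → ℝ := fun θ t =>
    (1 - ‖B2 t‖ ^ 2) / ‖Complex.exp (Complex.ofReal θ * Complex.I) - B2 t‖ ^ 2
    with hgdef
  have hexpc : Continuous fun θ : ℝ => Complex.exp (Complex.ofReal θ * Complex.I) := by
    fun_prop
  have hgmeas : Measurable (Function.uncurry g) := by
    have h1 : Measurable fun p : ℝ × ℝ => B2 p.2 := hB2meas.comp measurable_snd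
    have h2 : Measurable fun p : ℝ × ℝ => Complex.exp (Complex.ofReal p.1 * Complex.I) :=
      (hexpc.measurable).comp measurable_fst
    exact Measurable.div
      (Measurable.const_sub ((continuous_norm.measurable.comp h1).pow_const 2) 1)
      ((continuous_norm.measurable.comp (h2.sub h1)).pow_const 2)
  have hgmeas' : ∀ θ, Measurable (g θ) := by
    intro θ
    exact Measurable.div
      (Measurable.const_sub ((continuous_norm.measurable.comp hB2meas).pow_const 2) 1)
      ((continuous_norm.measurable.comp (measurable_const.sub hB2meas)).pow_const 2)
  have hgnn : ∀ θ t, 0 ≤ g θ t := by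
    intro θ t
    apply div_nonneg _ (by positivity)
    nlinarith [hB2lt t, norm_nonneg (B2 t)]
  have hgcont : ∀ t, Continuous fun θ => g θ t := by
    intro t
    apply Continuous.div continuous_const
      ((continuous_norm.comp (hexpc.sub continuous_const)).pow 2)
    intro θ
    have hne : Complex.exp (Complex.ofReal θ * Complex.I) - B2 t ≠ 0 := by
      intro h
      have h2 : Complex.exp (Complex.ofReal θ * Complex.I) = B2 t := by linear_combination h
      have := hB2lt t
      rw [← h2, Complex.norm_exp_ofReal_mul_I] at this
      linarith
    exact pow_ne_zero 2 (norm_ne_zero_iff.mpr hne)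
  -- Step 4: Poisson for each t
  have hpoisson : ∀ t, ∫ θ in Ioc 0 (2 * Real.pi), g θ t = 2 * Real.pi :=
    fun t => poisson (hB2lt t)
  -- Step 6: Tonelli
  set c : ENNReal := ENNReal.ofReal (2 * Real.pi) with hc
  have hc0 : c ≠ 0 := by simp [hc]; positivity
  have hctop : c ≠ ⊤ := ENNReal.ofReal_ne_top
  have hνuniv : ν univ = c := by
    rw [hν, Measure.restrict_apply_univ, Real.volume_Ioc, hc]
    norm_num
  set H : ℝ → ENNReal := fun θ => ∫⁻ t, ENNReal.ofReal (g θ t) ∂ν with hH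
  have hHmeas : Measurable H := Measurable.lintegral_prod_right
    (ENNReal.measurable_ofReal.comp hgmeas)
  have hinner : ∀ t, ∫⁻ θ, ENNReal.ofReal (g θ t) ∂ν = c := by
    intro t
    rw [← ofReal_integral_eq_lintegral_ofReal ((hgcont t).integrableOn_Ioc)
      (Eventually.of_forall fun θ => hgnn θ t)]
    rw [hpoisson t]
  have htonelli : ∫⁻ θ, H θ ∂ν = c * c := by
    rw [hH]
    rw [lintegral_lintegral_swap (f := fun θ t => ENNReal.ofReal (g θ t))
      (ENNReal.measurable_ofReal.comp hgmeas).aemeasurable]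
    simp_rw [hinner]
    rw [lintegral_const, hνuniv]
  have hHlt : ∀ᵐ θ ∂ν, H θ < ⊤ := by
    apply ae_lt_top hHmeas
    rw [htonelli]
    exact ENNReal.mul_ne_top hctop hctop
  -- real inner integral
  have hreal : ∀ θ, ∫ t, g θ t ∂ν = (H θ).toReal := by
    intro θ
    rw [integral_eq_lintegral_of_nonneg_ae (Eventually.of_forall fun t => hgnn θ t)
      (hgmeas' θ).aestronglyMeasurable]
  constructor
  · -- first conjunct
    have hcongr : ∀ θ, (∫ t in Ioc 0 (2 * Real.pi),
        (1 - ‖B t‖ ^ 2) /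
          ‖Complex.exp (Complex.ofReal θ * Complex.I) - B t‖ ^ 2 / (2 * Real.pi))
        = (∫ t, g θ t ∂ν) / (2 * Real.pi) := by
      intro θ
      rw [← integral_div]
      apply integral_congr_ae
      filter_upwards [hBB2] with t ht
      rw [ht]
    calc (∫ θ in Ioc 0 (2 * Real.pi),
        (∫ t in Ioc 0 (2 * Real.pi),
          (1 - ‖B t‖ ^ 2) /
            ‖Complex.exp (Complex.ofReal θ * Complex.I) - B t‖ ^ 2 /
              (2 * Real.pi)) / (2 * Real.pi))
        = ∫ θ in Ioc 0 (2 * Real.pi), ((H θ).toReal / (2 * Real.pi)) / (2 * Real.pi) := by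
          apply integral_congr_ae
          apply Eventually.of_forall
          intro θ
          dsimp only
          rw [hcongr θ, hreal θ]
      _ = (∫ θ, (H θ).toReal ∂ν) / (2 * Real.pi) / (2 * Real.pi) := by
          rw [← integral_div, ← integral_div]
      _ = 1 := by
          rw [integral_toReal hHmeas.aemeasurable hHlt, htonelli]
          rw [ENNReal.toReal_mul, hc, ENNReal.toReal_ofReal (le_of_lt hpi)]
          field_simp
  · -- second conjunct
    haveI hνfin : IsFiniteMeasure ν := by
      constructor
      rw [hνuniv]
      exact hctop.lt_top
    set L : ℝ → ENNReal := fun θ => H θ / c with hL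
    have hLmeas : Measurable L := hHmeas.div_const c
    have hLrn : ∀ θ, ∫⁻ t, (μ θ).rnDeriv ν t ∂ν = L θ := by
      intro θ
      rw [lintegral_congr_ae (hdens θ)]
      have heq : ∀ᵐ t ∂ν,
          ENNReal.ofReal ((1 - ‖B t‖ ^ 2) /
            ‖Complex.exp (Complex.ofReal θ * Complex.I) - B t‖ ^ 2 / (2 * Real.pi))
          = ENNReal.ofReal (g θ t) * c⁻¹ := by
        filter_upwards [hBB2] with t ht
        rw [ht, ENNReal.ofReal_div_of_pos hpi, hc, div_eq_mul_inv]
      rw [lintegral_congr_ae heq, lintegral_mul_const' _ _ (by simp [hc0])]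
      simp only [hL, hH, div_eq_mul_inv]
    have hdecomp : ∀ θ, (μ θ).singularPart ν univ + L θ = 1 := by
      intro θ
      haveI := hprob θ
      have h := ((μ θ).haveLebesgueDecomposition_add ν)
      have h2 := congrArg (fun m : Measure ℝ => m univ) h
      simp only [Measure.coe_add, Pi.add_apply] at h2
      rw [measure_univ, withDensity_apply _ MeasurableSet.univ, setLIntegral_univ, hLrn θ] at h2
      exact h2.symm
    have hLle : ∀ θ, L θ ≤ 1 := fun θ => by rw [← hdecomp θ]; exact le_add_self
    have hLint : ∫⁻ θ, L θ ∂ν = c := by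
      have : ∀ θ, L θ = H θ * c⁻¹ := fun θ => div_eq_mul_inv (H θ) c
      simp_rw [this]
      rw [lintegral_mul_const _ hHmeas, htonelli, mul_assoc,
        ENNReal.mul_inv_cancel hc0 hctop, mul_one]
    have hzero : ∫⁻ θ, (1 - L θ) ∂ν = 0 := by
      rw [lintegral_sub hLmeas (by rw [hLint]; exact hctop)
        (Eventually.of_forall hLle)]
      rw [lintegral_one, hνuniv, hLint, tsub_self]
    have hae : ∀ᵐ θ ∂ν, (fun θ => 1 - L θ) θ = 0 :=
      (lintegral_eq_zero_iff (measurable_const.sub hLmeas)).mp hzero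
    filter_upwards [hae] with θ hθ
    have hLθ : L θ = 1 := le_antisymm (hLle θ) (tsub_eq_zero_iff_le.mp hθ)
    have hd := hdecomp θ
    rw [hLθ] at hd
    have hsp : (μ θ).singularPart ν univ = 0 := by
      have h1 := ENNReal.eq_sub_of_add_eq ENNReal.one_ne_top hd
      simpa using h1
    exact Measure.measure_univ_eq_zero.mp hsp
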